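/- Let G = (V,E) be a weighted directed graph with integer weights, let π be a valid potential function for G, and let E′ = { (u,v) | (u,v,d) ∈ E, π(u) + d = π(v) } be the set of tight edges. Then two vertices u and v are mutually reachable in the unweighted directed graph (V,E′) (i.e., lie in the same strongly connected component) if and only if there is a zero-weight cycle in G containing both u and v. -/

import Mathlib

namespace UTVPIPaper

/-- `IsPath E u p v`: `p` is a path (a sequence of consecutive weighted edges,
each belonging to the edge set `E`) from vertex `u` to vertex `v`. -/
inductive IsPath {V : Type*} (E : Set (V × V × ℤ)) : V → List (V × V × ℤ) → V → Prop
  | nil (v : V) : IsPath E v [] v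
  | cons {u v w : V} {d : ℤ} {p : List (V × V × ℤ)} :
      (u, v, d) ∈ E → IsPath E v p w → IsPath E u ((u, v, d) :: p) w

/-- The weight of a path: the sum of the weights of its edges. -/
def pweight {V : Type*} (p : List (V × V × ℤ)) : ℤ := (p.map fun e => e.2.2).sum

/-- The graph `E` has no negative weight cycle. -/
def NoNegCycle {V : Type*} (E : Set (V × V × ℤ)) : Prop :=
  ∀ (v : V) (p : List (V × V × ℤ)), IsPath E v p v → 0 ≤ pweight p

/-- `wSP E u v` is the minimum weight of a path from `u` to `v` in `E`
(`⊤` if no path exists). -/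
noncomputable def wSP {V : Type*} (E : Set (V × V × ℤ)) (u v : V) : WithTop ℤ :=
  sInf {w : WithTop ℤ | ∃ p, IsPath E u p v ∧ (pweight p : WithTop ℤ) = w}


/-- `π` is a valid potential function for the graph `E`:
`π(u) + d - π(v) ≥ 0` for every edge `(u, v, d)`. -/
def ValidPotential {V : Type*} (E : Set (V × V × ℤ)) (π : V → ℤ) : Prop :=
  ∀ e ∈ E, 0 ≤ π e.1 + e.2.2 - π e.2.1

section Aux

variable {V : Type*} {E : Set (V × V × ℤ)} {π : V → ℤ}

lemma IsPath.append {u v w : V} {p q : List (V × V × ℤ)}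
    (hp : IsPath E u p v) (hq : IsPath E v q w) : IsPath E u (p ++ q) w := by
  induction hp with
  | nil => simpa
  | cons he _ ih => exact IsPath.cons he (ih hq)

lemma IsPath.mem_E {u v : V} {p : List (V × V × ℤ)} (hp : IsPath E u p v) :
    ∀ e ∈ p, e ∈ E := by
  induction hp with
  | nil => simp
  | cons he _ ih =>
    intro e hmem
    rcases List.mem_cons.1 hmem with rfl | h
    · exact he
    · exact ih e h

lemma IsPath.head_mem {u v : V} {p : List (V × V × ℤ)} (hp : IsPath E u p v)
    (hne : p ≠ []) : u ∈ p.map (fun e => e.1) := by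
  cases hp with
  | nil => exact absurd rfl hne
  | cons he htail => simp

lemma tight_path_of_transGen {u v : V}
    (h : Relation.TransGen (fun a b : V => ∃ d : ℤ, (a, b, d) ∈ E ∧ π a + d = π b) u v) :
    ∃ p, IsPath E u p v ∧ p ≠ [] ∧ ∀ e ∈ p, π e.1 + e.2.2 = π e.2.1 := by
  induction h with
  | single hr =>
    obtain ⟨d, hd, ht⟩ := hr
    exact ⟨[(u, _, d)], IsPath.cons hd (IsPath.nil _), by simp, by simpa⟩
  | tail _ hr ih =>
    obtain ⟨p, hp, hne, ht⟩ := ih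
    obtain ⟨d, hd, htt⟩ := hr
    refine ⟨p ++ [(_, _, d)], hp.append (IsPath.cons hd (IsPath.nil _)), by simp, ?_⟩
    intro e he
    rcases List.mem_append.1 he with h1 | h2
    · exact ht e h1
    · simp at h2; subst h2; simpa

lemma pweight_tight {u v : V} {p : List (V × V × ℤ)} (hp : IsPath E u p v)
    (ht : ∀ e ∈ p, π e.1 + e.2.2 = π e.2.1) : pweight p = π v - π u := by
  induction hp with
  | nil => simp [pweight]
  | @cons a b c d p' he hp' ih =>
    have h1 : π a + d = π b := ht _ (List.mem_cons_self)
    have h2 := ih (fun e he' => ht e (List.mem_cons_of_mem _ he'))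
    simp only [pweight, List.map_cons, List.sum_cons] at h2 ⊢
    omega

lemma slack_sum {u v : V} {p : List (V × V × ℤ)} (hp : IsPath E u p v) :
    (p.map fun e => π e.1 + e.2.2 - π e.2.1).sum = π u + pweight p - π v := by
  induction hp with
  | nil => simp [pweight]
  | @cons a b c d p' he hp' ih =>
    simp only [pweight, List.map_cons, List.sum_cons] at ih ⊢
    omega

lemma all_zero_of_sum_zero : ∀ (l : List ℤ), (∀ x ∈ l, 0 ≤ x) → l.sum = 0 → ∀ x ∈ l, x = 0 := by
  intro l
  induction l with
  | nil => simp
  | cons a l ih =>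
    intro hnn hs x hx
    have hl : 0 ≤ l.sum := List.sum_nonneg fun y hy => hnn y (List.mem_cons_of_mem _ hy)
    have ha := hnn a (List.mem_cons_self)
    simp only [List.sum_cons] at hs
    rcases List.mem_cons.1 hx with rfl | hx'
    · omega
    · exact ih (fun y hy => hnn y (List.mem_cons_of_mem _ hy)) (by omega) x hx'

lemma reflTransGen_of_tight_path {u v : V} {p : List (V × V × ℤ)} (hp : IsPath E u p v)
    (ht : ∀ e ∈ p, π e.1 + e.2.2 = π e.2.1) :
    Relation.ReflTransGen (fun a b : V => ∃ d : ℤ, (a, b, d) ∈ E ∧ π a + d = π b) u v := by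
  induction hp with
  | nil => exact Relation.ReflTransGen.refl
  | @cons a b c d p' he hp' ih =>
    exact Relation.ReflTransGen.head
      ⟨d, he, ht _ (List.mem_cons_self)⟩
      (ih (fun e he' => ht e (List.mem_cons_of_mem _ he')))

lemma reach_of_source {u v x : V} {p : List (V × V × ℤ)} (hp : IsPath E u p v)
    (ht : ∀ e ∈ p, π e.1 + e.2.2 = π e.2.1) (hx : x ∈ p.map (fun e => e.1)) :
    Relation.ReflTransGen (fun a b : V => ∃ d : ℤ, (a, b, d) ∈ E ∧ π a + d = π b) u x ∧
    Relation.TransGen (fun a b : V => ∃ d : ℤ, (a, b, d) ∈ E ∧ π a + d = π b) x v := by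
  induction hp with
  | nil => simp at hx
  | @cons a b c d p' he hp' ih =>
    have hR : (fun a b : V => ∃ d : ℤ, (a, b, d) ∈ E ∧ π a + d = π b) a b :=
      ⟨d, he, ht _ (List.mem_cons_self)⟩
    have ht' : ∀ e ∈ p', π e.1 + e.2.2 = π e.2.1 :=
      fun e he' => ht e (List.mem_cons_of_mem _ he')
    simp only [List.map_cons, List.mem_cons] at hx
    rcases hx with rfl | hx'
    · exact ⟨Relation.ReflTransGen.refl,
        Relation.TransGen.head' hR (reflTransGen_of_tight_path hp' ht')⟩
    · obtain ⟨h1, h2⟩ := ih ht' hx'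
      exact ⟨Relation.ReflTransGen.head hR h1, h2⟩

end Aux

/-- Let `π` be a valid potential function for `G = (V, E)` and let
`E'` be the set of tight edges `(u, v)` (those with `π(u) + d = π(v)` for some
`(u, v, d) ∈ E`). Then `u` and `v` are mutually reachable in `(V, E')` (i.e. lie in
the same strongly connected component) iff there is a zero-weight cycle in `G`
containing both `u` and `v`. -/
theorem same_SCC_of_tight_iff_zero_cycle {V : Type*}
    (E : Set (V × V × ℤ)) (π : V → ℤ) (hπ : ValidPotential E π) (u v : V) :
    (Relation.TransGen (fun a b : V => ∃ d : ℤ, (a, b, d) ∈ E ∧ π a + d = π b) u v ∧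
     Relation.TransGen (fun a b : V => ∃ d : ℤ, (a, b, d) ∈ E ∧ π a + d = π b) v u) ↔
    ∃ (a : V) (p : List (V × V × ℤ)),
      IsPath E a p a ∧ p ≠ [] ∧ pweight p = 0 ∧
      u ∈ p.map (fun e => e.1) ∧ v ∈ p.map (fun e => e.1) := by
  constructor
  · rintro ⟨h1, h2⟩
    obtain ⟨p₁, hp₁, hne₁, ht₁⟩ := tight_path_of_transGen h1
    obtain ⟨p₂, hp₂, hne₂, ht₂⟩ := tight_path_of_transGen h2
    refine ⟨u, p₁ ++ p₂, hp₁.append hp₂, by simp [hne₁], ?_, ?_, ?_⟩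
    · have w1 := pweight_tight hp₁ ht₁
      have w2 := pweight_tight hp₂ ht₂
      simp only [pweight, List.map_append, List.sum_append] at w1 w2 ⊢
      omega
    · simp only [List.map_append, List.mem_append]
      exact Or.inl (hp₁.head_mem hne₁)
    · simp only [List.map_append, List.mem_append]
      exact Or.inr (hp₂.head_mem hne₂)
  · rintro ⟨a, p, hp, hne, hw, hu, hv⟩
    have ht : ∀ e ∈ p, π e.1 + e.2.2 = π e.2.1 := by
      have hsum : (p.map fun e => π e.1 + e.2.2 - π e.2.1).sum = 0 := by
        rw [slack_sum hp]; omega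
      intro e he
      have := all_zero_of_sum_zero _
        (by rintro x hx
            obtain ⟨e', he', rfl⟩ := List.mem_map.1 hx
            exact hπ e' (hp.mem_E e' he'))
        hsum (π e.1 + e.2.2 - π e.2.1) (List.mem_map_of_mem he)
      omega
    obtain ⟨hau, hua⟩ := reach_of_source hp ht hu
    obtain ⟨hav, hva⟩ := reach_of_source hp ht hv
    exact ⟨hua.trans_left hav, hva.trans_left hau⟩

end UTVPIPaper
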